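/- Let U = (E, ≼) be an extensional structure on a PCS X. If (u(n)) and (v(n)) are ≤-monotone sequences in P(X) with u(n) ≼ v(n) for each n, then sup_n u(n) ≼ sup_n v(n) (the pointwise suprema, which belong to P(X)). -/
import Mathlib


open scoped ENNReal NNReal

noncomputable section

def dot {I : Type*} (u v : I → ℝ≥0∞) : ℝ≥0∞ := ∑' i, u i * v i

def orth {I : Type*} (P : Set (I → ℝ≥0∞)) : Set (I → ℝ≥0∞) :=
  {v | ∀ u ∈ P, dot u v ≤ 1}

/-- A pre-extensional structure: a set `E` of vectors together with a binary
relation `r` (intended to be a relation on `E`). -/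
structure PreExt (I : Type*) where
  E : Set (I → ℝ≥0∞)
  r : (I → ℝ≥0∞) → (I → ℝ≥0∞) → Prop

/-- The set component of the dual pre-extensional structure, on the dual PCS `orth P`. -/
def dualE {I : Type*} (P : Set (I → ℝ≥0∞)) (U : PreExt I) : Set (I → ℝ≥0∞) :=
  {u' | u' ∈ orth P ∧ ∀ u v, u ∈ U.E → v ∈ U.E → U.r u v → dot u u' ≤ dot v u'}

/-- The dual pre-extensional structure on the dual PCS `orth P`. -/
def PreExt.dual {I : Type*} (P : Set (I → ℝ≥0∞)) (U : PreExt I) : PreExt I where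
  E := dualE P U
  r := fun u' v' => u' ∈ dualE P U ∧ v' ∈ dualE P U ∧ ∀ u ∈ U.E, dot u u' ≤ dot u v'

/-- Componentwise inclusion of pre-extensional structures. -/
def PreExt.le {I : Type*} (U₁ U₂ : PreExt I) : Prop :=
  U₁.E ⊆ U₂.E ∧ ∀ u v, U₁.r u v → U₂.r u v

/-- `P` is (the set of vectors of) a PCS with web `I`. -/
def IsPCS {I : Type*} (P : Set (I → ℝ≥0∞)) : Prop :=
  orth (orth P) = P ∧ (∀ a : I, ∃ u ∈ P, 0 < u a) ∧
    (∀ a : I, ∃ m : ℝ≥0, ∀ u ∈ P, u a ≤ m)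

/-- `U` is a pre-extensional structure *on* the PCS `P`. -/
def IsPreExtOn {I : Type*} (P : Set (I → ℝ≥0∞)) (U : PreExt I) : Prop :=
  U.E ⊆ P ∧ ∀ u v, U.r u v → u ∈ U.E ∧ v ∈ U.E

lemma tsum_iSup_mono {I : Type*} (f : ℕ → I → ℝ≥0∞) (hf : Monotone f) :
    ∑' i, ⨆ n, f n i = ⨆ n, ∑' i, f n i := by
  apply le_antisymm
  · rw [ENNReal.tsum_eq_iSup_sum]
    refine iSup_le fun s => ?_
    rw [ENNReal.finsetSum_iSup_of_monotone (fun a m n h => hf h a)]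
    exact iSup_mono fun n => ENNReal.sum_le_tsum s
  · exact iSup_le fun n => ENNReal.tsum_le_tsum fun i => le_iSup (fun n => f n i) n

lemma dot_iSup_mono {I : Type*} (w : I → ℝ≥0∞) (f : ℕ → I → ℝ≥0∞) (hf : Monotone f) :
    dot w (fun a => ⨆ n, f n a) = ⨆ n, dot w (f n) := by
  unfold dot
  simp_rw [ENNReal.mul_iSup]
  exact tsum_iSup_mono (fun n i => w i * f n i) (fun m n h i => mul_le_mul_right (hf h i) (w i))

lemma dot_comm {I : Type*} (a b : I → ℝ≥0∞) : dot a b = dot b a := by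
  unfold dot; simp_rw [mul_comm]

lemma sup_mem_dualE {I : Type*} (P : Set (I → ℝ≥0∞)) (hP : IsPCS P)
    (U : PreExt I) (f : ℕ → I → ℝ≥0∞) (hf : Monotone f)
    (hmem : ∀ n, f n ∈ dualE (orth P) (U.dual P)) :
    (fun a => ⨆ n, f n a) ∈ dualE (orth P) (U.dual P) := by
  constructor
  · intro w hw
    rw [dot_iSup_mono w f hf]
    exact iSup_le fun n => (hmem n).1 w hw
  · intro a b ha hb hab
    rw [dot_iSup_mono a f hf, dot_iSup_mono b f hf]
    exact iSup_mono fun n => (hmem n).2 a b ha hb hab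

theorem stmt9 {I : Type*} [Countable I] (P : Set (I → ℝ≥0∞)) (hP : IsPCS P)
    (U : PreExt I) (hU : IsPreExtOn P U)
    (hext : U = (U.dual P).dual (orth P))
    (u v : ℕ → I → ℝ≥0∞) (hu : Monotone u) (hv : Monotone v)
    (humem : ∀ n, u n ∈ P) (hvmem : ∀ n, v n ∈ P)
    (hr : ∀ n, U.r (u n) (v n)) :
    U.r (fun a => ⨆ n, u n a) (fun a => ⨆ n, v n a) := by
  rw [hext] at hr ⊢
  refine ⟨sup_mem_dualE P hP U u hu (fun n => (hr n).1),
          sup_mem_dualE P hP U v hv (fun n => (hr n).2.1), fun w hw => ?_⟩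
  rw [dot_iSup_mono w u hu, dot_iSup_mono w v hv]
  exact iSup_mono fun n => (hr n).2.2 w hw
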